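/- Let D[u] ∝ exp(-λ|t/2 - u|) on u ∈ {0,...,t}, and for x ∈ {0,...,m-1} define D_x[x+um] = D[u]. Suppose x1' + x2' = x1 + x2 + m with all four values in {0,...,m-1}. If z = x1 + x2 + vm for an integer v ∈ [0, t], then (D_{x1} * D_{x2})[z] ≤ e^λ · (D_{x1'} * D_{x2'})[z] + D[v]·D[0] and (D_{x1'} * D_{x2'})[z] ≤ e^λ · (D_{x1} * D_{x2})[z]. -/

import Mathlib

/-- The truncated discrete Laplace weight `D[u] = exp(-λ|t/2 - u|)/Z` on
`u ∈ {0,...,t}`, where `Z` is the normalizing constant. -/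
noncomputable def Dmass (lam : ℝ) (t u : ℕ) : ℝ :=
  Real.exp (-lam * |(t : ℝ) / 2 - u|) /
    ∑ w ∈ Finset.range (t + 1), Real.exp (-lam * |(t : ℝ) / 2 - w|)

/-- `D_x`: the distribution placing mass `D[u]` on `x + u·m` for `u ∈ {0,...,t}`. -/
noncomputable def Dshift (lam : ℝ) (t m x : ℕ) (z : ℤ) : ℝ :=
  ∑ u ∈ Finset.range (t + 1), if z = (x : ℤ) + u * m then Dmass lam t u else 0

/-- Convolution of mass functions on `ℤ`: `(A*B)[z] = ∑_w A[w]·B[z-w]`. -/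
noncomputable def convZ (A B : ℤ → ℝ) (z : ℤ) : ℝ := ∑' w : ℤ, A w * B (z - w)

open Finset

lemma Zpos (lam : ℝ) (t : ℕ) :
    0 < ∑ w ∈ Finset.range (t + 1), Real.exp (-lam * |(t : ℝ) / 2 - w|) :=
  Finset.sum_pos (fun w _ => Real.exp_pos _) (by simp)

lemma Dmass_pos (lam : ℝ) (t u : ℕ) : 0 < Dmass lam t u :=
  div_pos (Real.exp_pos _) (Zpos lam t)

lemma Dmass_step (lam : ℝ) (h : 0 ≤ lam) (t a b : ℕ) (hab : |(a : ℝ) - b| ≤ 1) :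
    Dmass lam t a ≤ Real.exp lam * Dmass lam t b := by
  unfold Dmass
  rw [← mul_div_assoc, div_le_div_iff₀ (Zpos lam t) (Zpos lam t)]
  apply mul_le_mul_of_nonneg_right _ (Zpos lam t).le
  rw [← Real.exp_add]
  apply Real.exp_le_exp.mpr
  have h1 : |(t : ℝ) / 2 - b| - |(t : ℝ) / 2 - a| ≤ |(a : ℝ) - b| := by
    have := abs_sub_abs_le_abs_sub ((t : ℝ) / 2 - b) ((t : ℝ) / 2 - a)
    have he : ((t : ℝ) / 2 - b) - ((t : ℝ) / 2 - a) = (a : ℝ) - b := by ring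
    rwa [he] at this
  nlinarith [mul_le_mul_of_nonneg_left (h1.trans hab) h]

lemma Dmass_step_up (lam : ℝ) (h : 0 ≤ lam) (t a : ℕ) :
    Dmass lam t (a + 1) ≤ Real.exp lam * Dmass lam t a :=
  Dmass_step lam h t (a + 1) a (by push_cast; simp)

lemma Dmass_step_down (lam : ℝ) (h : 0 ≤ lam) (t a : ℕ) :
    Dmass lam t a ≤ Real.exp lam * Dmass lam t (a + 1) :=
  Dmass_step lam h t a (a + 1) (by push_cast; rw [show (a:ℝ) - (a+1) = -1 by ring]; simp)

lemma dshift_apply (lam : ℝ) (t m x : ℕ) (hm : 0 < m) (u : ℕ) (hu : u ∈ Finset.range (t + 1)) :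
    Dshift lam t m x ((x : ℤ) + u * m) = Dmass lam t u := by
  unfold Dshift
  rw [Finset.sum_eq_single u]
  · rw [if_pos rfl]
  · intro b _ hbu
    rw [if_neg]
    intro h
    apply hbu
    have hm' : (m : ℤ) ≠ 0 := by exact_mod_cast hm.ne'
    have hub : (u : ℤ) * m = b * m := by linarith
    have : (u : ℤ) = b := mul_right_cancel₀ hm' hub
    exact_mod_cast this.symm
  · intro h; exact absurd hu h

lemma conv_eval (lam : ℝ) (t m x y : ℕ) (hm : 0 < m) (z : ℤ) :
    convZ (Dshift lam t m x) (Dshift lam t m y) z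
      = ∑ u1 ∈ Finset.range (t + 1), ∑ u2 ∈ Finset.range (t + 1),
          if z = (x : ℤ) + y + (u1 + u2) * m then Dmass lam t u1 * Dmass lam t u2 else 0 := by
  have hm' : (m : ℤ) ≠ 0 := by exact_mod_cast hm.ne'
  unfold convZ
  rw [tsum_eq_sum (s := (Finset.range (t + 1)).image (fun u : ℕ => (x : ℤ) + u * m))
      (by
        intro w hw
        have hA : Dshift lam t m x w = 0 := by
          unfold Dshift
          apply Finset.sum_eq_zero
          intro u hu
          rw [if_neg]
          intro hwe
          exact hw (Finset.mem_image.mpr ⟨u, hu, hwe.symm⟩)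
        rw [hA, zero_mul])]
  rw [Finset.sum_image (by
      intro a _ b _ hab
      have hab' : (x : ℤ) + a * m = (x : ℤ) + b * m := hab
      have hub : (a : ℤ) * m = b * m := by linarith
      have : (a : ℤ) = b := mul_right_cancel₀ hm' hub
      exact_mod_cast this)]
  apply Finset.sum_congr rfl
  intro u1 hu1
  rw [dshift_apply lam t m x hm u1 hu1]
  unfold Dshift
  rw [Finset.mul_sum]
  apply Finset.sum_congr rfl
  intro u2 _
  rw [mul_ite, mul_zero]
  apply if_congr _ rfl rfl
  constructor
  · intro h
    push_cast
    push_cast at h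
    linarith [add_mul (u1 : ℝ) u2 m]
  · intro h
    push_cast at h ⊢
    linarith [add_mul (u1 : ℝ) u2 m]

lemma collapse (lam : ℝ) (t v : ℕ) (hv : v ≤ t) :
    (∑ u1 ∈ Finset.range (t + 1), ∑ u2 ∈ Finset.range (t + 1),
      if u1 + u2 = v then Dmass lam t u1 * Dmass lam t u2 else 0)
    = ∑ u ∈ Finset.range (v + 1), Dmass lam t u * Dmass lam t (v - u) := by
  have h1 : ∀ u1 ∈ Finset.range (t + 1),
      (∑ u2 ∈ Finset.range (t + 1), if u1 + u2 = v then Dmass lam t u1 * Dmass lam t u2 else 0)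
      = if u1 ∈ Finset.range (v + 1) then Dmass lam t u1 * Dmass lam t (v - u1) else 0 := by
    intro u1 _
    by_cases h : u1 ∈ Finset.range (v + 1)
    · simp only [Finset.mem_range] at h
      rw [if_pos (Finset.mem_range.mpr h)]
      rw [Finset.sum_eq_single (v - u1)]
      · rw [if_pos (by omega)]
      · intro b _ hb
        rw [if_neg (by omega)]
      · intro hmem
        exact absurd (Finset.mem_range.mpr (by omega)) hmem
    · simp only [Finset.mem_range] at h
      rw [if_neg (by simpa using h)]
      apply Finset.sum_eq_zero
      intro b _
      rw [if_neg (by omega)]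
  rw [Finset.sum_congr rfl h1, Finset.sum_ite_mem]
  congr 1
  rw [Finset.inter_eq_right.mpr]
  intro a ha
  simp only [Finset.mem_range] at ha ⊢
  omega

lemma ineq1 (lam : ℝ) (h : 0 ≤ lam) (t k : ℕ) :
    (∑ u ∈ Finset.range (k + 2), Dmass lam t u * Dmass lam t (k + 1 - u))
      ≤ Real.exp lam * (∑ u ∈ Finset.range (k + 1), Dmass lam t u * Dmass lam t (k - u))
        + Dmass lam t (k + 1) * Dmass lam t 0 := by
  rw [Finset.sum_range_succ, Nat.sub_self]
  have : (∑ u ∈ Finset.range (k + 1), Dmass lam t u * Dmass lam t (k + 1 - u))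
      ≤ Real.exp lam * (∑ u ∈ Finset.range (k + 1), Dmass lam t u * Dmass lam t (k - u)) := by
    rw [Finset.mul_sum]
    apply Finset.sum_le_sum
    intro u hu
    simp only [Finset.mem_range] at hu
    rw [show k + 1 - u = (k - u) + 1 by omega]
    have h1 := Dmass_step_up lam h t (k - u)
    have h2 := (Dmass_pos lam t u).le
    nlinarith [Dmass_pos lam t ((k - u) + 1)]
  linarith

lemma ineq2 (lam : ℝ) (h : 0 ≤ lam) (t k : ℕ) :
    (∑ u ∈ Finset.range (k + 1), Dmass lam t u * Dmass lam t (k - u))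
      ≤ Real.exp lam * (∑ u ∈ Finset.range (k + 2), Dmass lam t u * Dmass lam t (k + 1 - u)) := by
  have step : (∑ u ∈ Finset.range (k + 1), Dmass lam t u * Dmass lam t (k - u))
      ≤ Real.exp lam * (∑ u ∈ Finset.range (k + 1), Dmass lam t u * Dmass lam t (k + 1 - u)) := by
    rw [Finset.mul_sum]
    apply Finset.sum_le_sum
    intro u hu
    simp only [Finset.mem_range] at hu
    rw [show k + 1 - u = (k - u) + 1 by omega]
    have h1 := Dmass_step_down lam h t (k - u)
    have h2 := (Dmass_pos lam t u).le
    nlinarith [Dmass_pos lam t (k - u)]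
  have hlast : 0 ≤ Dmass lam t (k + 1) * Dmass lam t (k + 1 - (k + 1)) :=
    le_of_lt (mul_pos (Dmass_pos lam t _) (Dmass_pos lam t _))
  have hexp : (∑ u ∈ Finset.range (k + 2), Dmass lam t u * Dmass lam t (k + 1 - u))
      = (∑ u ∈ Finset.range (k + 1), Dmass lam t u * Dmass lam t (k + 1 - u))
        + Dmass lam t (k + 1) * Dmass lam t (k + 1 - (k + 1)) := Finset.sum_range_succ _ _
  rw [hexp]
  nlinarith [Real.exp_pos lam]

/-- if `x1' + x2' = x1 + x2 + m` (all four in `{0,...,m-1}`) and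
`z = x1 + x2 + v·m` for an integer `v ∈ [0, t]`, then
`(D_{x1} * D_{x2})[z] ≤ e^λ (D_{x1'} * D_{x2'})[z] + D[v]·D[0]` and
`(D_{x1'} * D_{x2'})[z] ≤ e^λ (D_{x1} * D_{x2})[z]`. -/
theorem stmt8 (lam : ℝ) (h0 : 0 < lam) (h1 : lam < 1) (t m : ℕ) (hodd : Odd t)
    (hm : 2 ≤ m) (x1 x2 x1' x2' : ℕ)
    (hx1 : x1 < m) (hx2 : x2 < m) (hx1' : x1' < m) (hx2' : x2' < m)
    (hsum : x1' + x2' = x1 + x2 + m)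
    (v : ℕ) (hv : v ≤ t) (z : ℤ) (hz : z = (x1 : ℤ) + x2 + v * m) :
    convZ (Dshift lam t m x1) (Dshift lam t m x2) z
      ≤ Real.exp lam * convZ (Dshift lam t m x1') (Dshift lam t m x2') z
        + Dmass lam t v * Dmass lam t 0 ∧
    convZ (Dshift lam t m x1') (Dshift lam t m x2') z
      ≤ Real.exp lam * convZ (Dshift lam t m x1) (Dshift lam t m x2) z := by
  have hm0 : 0 < m := by omega
  have hm' : (m : ℤ) ≠ 0 := by exact_mod_cast hm0.ne'
  have hsum' : (x1' : ℤ) + x2' = (x1 : ℤ) + x2 + m := by exact_mod_cast hsum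
  -- unprimed convolution
  have e1 : convZ (Dshift lam t m x1) (Dshift lam t m x2) z
      = ∑ u ∈ Finset.range (v + 1), Dmass lam t u * Dmass lam t (v - u) := by
    rw [conv_eval lam t m x1 x2 hm0 z, ← collapse lam t v hv]
    apply Finset.sum_congr rfl; intro u1 _
    apply Finset.sum_congr rfl; intro u2 _
    apply if_congr _ rfl rfl
    constructor
    · intro h
      have hvm : (v : ℤ) * m = ((u1 : ℤ) + u2) * m := by
        rw [hz] at h; linarith
      have : (v : ℤ) = (u1 : ℤ) + u2 := mul_right_cancel₀ hm' hvm
      have : (v : ℤ) = ((u1 + u2 : ℕ) : ℤ) := by push_cast; linarith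
      omega
    · intro h
      rw [hz]
      have hc : ((u1 : ℤ) + u2) = (v : ℤ) := by exact_mod_cast congrArg (Nat.cast : ℕ → ℤ) h
      push_cast
      linear_combination (-(m : ℤ)) * hc
  -- primed convolution
  have e2 : convZ (Dshift lam t m x1') (Dshift lam t m x2') z
      = ∑ u1 ∈ Finset.range (t + 1), ∑ u2 ∈ Finset.range (t + 1),
          if u1 + u2 + 1 = v then Dmass lam t u1 * Dmass lam t u2 else 0 := by
    rw [conv_eval lam t m x1' x2' hm0 z]
    apply Finset.sum_congr rfl; intro u1 _
    apply Finset.sum_congr rfl; intro u2 _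
    apply if_congr _ rfl rfl
    constructor
    · intro h
      have hvm : (v : ℤ) * m = ((u1 : ℤ) + u2 + 1) * m := by
        rw [hz] at h
        push_cast at h
        have := add_mul ((u1 : ℤ) + u2) 1 m
        nlinarith [add_mul (u1 : ℤ) u2 m]
      have : (v : ℤ) = (u1 : ℤ) + u2 + 1 := mul_right_cancel₀ hm' hvm
      omega
    · intro h
      rw [hz]
      have hc : (u1 : ℤ) + u2 + 1 = v := by exact_mod_cast congrArg (Nat.cast : ℕ → ℤ) h
      push_cast
      linear_combination (-1 : ℤ) * hsum' - (m : ℤ) * hc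
  rcases Nat.eq_zero_or_pos v with hv0 | hvpos
  · subst hv0
    have e2' : convZ (Dshift lam t m x1') (Dshift lam t m x2') z = 0 := by
      rw [e2]
      apply Finset.sum_eq_zero; intro u1 _
      apply Finset.sum_eq_zero; intro u2 _
      rw [if_neg (by omega)]
    have e1' : convZ (Dshift lam t m x1) (Dshift lam t m x2) z
        = Dmass lam t 0 * Dmass lam t 0 := by
      rw [e1, Finset.sum_range_one]
    rw [e1', e2']
    constructor
    · rw [mul_zero, zero_add]
    · have := Dmass_pos lam t 0
      nlinarith [Real.exp_pos lam]
  · obtain ⟨k, rfl⟩ : ∃ k, v = k + 1 := ⟨v - 1, by omega⟩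
    have e2' : convZ (Dshift lam t m x1') (Dshift lam t m x2') z
        = ∑ u ∈ Finset.range (k + 1), Dmass lam t u * Dmass lam t (k - u) := by
      rw [e2, ← collapse lam t k (by omega)]
      apply Finset.sum_congr rfl; intro u1 _
      apply Finset.sum_congr rfl; intro u2 _
      apply if_congr _ rfl rfl
      omega
    rw [e1, e2']
    exact ⟨ineq1 lam h0.le t k, ineq2 lam h0.le t k⟩
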